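/- Fix R > 1 and define on the slit annulus {1 ≤ |z| ≤ R} \ [0, R] the map 𝔥(z) = −(2i/R) Arg z − ((R² − 1)/R) · log( (R − z)(z̄ R − 1)/(z̄ R²) ), with 0 < Arg z < 2π and the continuous branch of log. Then 𝔥 is harmonic, 𝔥_z = (zR − 1)/( z(R − z) ), conj(𝔥_z̄) = (z − R)/( z(zR − 1) ), and the Hopf product equals 𝔥_z · conj(𝔥_z̄) = −1/z². -/

import Mathlib

open Complex MeasureTheory Real Filter
open scoped Classical Topology

/-- Wirtinger derivative ∂f/∂z. -/
noncomputable def wdz (f : ℂ → ℂ) (z : ℂ) : ℂ :=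
  (fderiv ℝ f z 1 - Complex.I * fderiv ℝ f z Complex.I) / 2

/-- Wirtinger derivative ∂f/∂z̄. -/
noncomputable def wdzbar (f : ℂ → ℂ) (z : ℂ) : ℂ :=
  (fderiv ℝ f z 1 + Complex.I * fderiv ℝ f z Complex.I) / 2

/-- Jacobian determinant J(z,f) = |f_z|² − |f_z̄|². -/
noncomputable def jac (f : ℂ → ℂ) (z : ℂ) : ℝ :=
  ‖wdz f z‖ ^ 2 - ‖wdzbar f z‖ ^ 2

namespace Stmt16Aux



noncomputable def cR (R : ℝ) : ℂ := ((R : ℂ) ^ 2 - 1) / R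

noncomputable def Afun (R : ℝ) (z : ℂ) : ℂ :=
  -(1 / (R : ℂ)) * Complex.log (-z) - cR R * Complex.log ((R : ℂ) - z)

noncomputable def Bfun (R : ℝ) (w : ℂ) : ℂ :=
  (R : ℂ) * Complex.log (-w) - cR R * Complex.log (1 - w * (R : ℂ))

noncomputable def Pfun (R : ℝ) (z : ℂ) : ℂ :=
  ((R : ℂ) - z) * ((starRingEnd ℂ) z * (R : ℂ) - 1) / ((starRingEnd ℂ) z * (R : ℂ) ^ 2)

noncomputable def Efun (R : ℝ) (z : ℂ) : ℂ :=
  Complex.log (Pfun R z) - Complex.log ((R : ℂ) - z)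
    - Complex.log (1 - (starRingEnd ℂ) z * (R : ℂ)) + Complex.log (-(starRingEnd ℂ) z)

noncomputable def hform (R : ℝ) (z : ℂ) : ℂ :=
  -(2 * Complex.I / (R : ℂ))
      * (((if 0 < Complex.arg z then Complex.arg z else Complex.arg z + 2 * Real.pi : ℝ)) : ℂ)
    - (((R : ℂ) ^ 2 - 1) / (R : ℂ))
      * Complex.log (((R : ℂ) - z) * ((starRingEnd ℂ) z * (R : ℂ) - 1)
          / ((starRingEnd ℂ) z * (R : ℂ) ^ 2))

section basic

variable {R : ℝ} {z : ℂ}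

lemma hcases (hz : -z ∈ Complex.slitPlane) : z.re < 0 ∨ z.im ≠ 0 := by
  simpa [Complex.mem_slitPlane_iff] using hz

lemma hz_ne_zero (hz : -z ∈ Complex.slitPlane) : z ≠ 0 := by
  rcases hcases hz with h | h <;> intro h0 <;> simp [h0] at h

lemma hz_ne_R (hz : -z ∈ Complex.slitPlane) (hR : 1 < R) : z ≠ (R : ℂ) := by
  rcases hcases hz with h | h <;> intro h0 <;> rw [h0] at h <;> simp at h
  · linarith
lemma hz_conj_ne (hz : -z ∈ Complex.slitPlane) (hR : 1 < R) :
    (starRingEnd ℂ) z * (R : ℂ) ≠ 1 := by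
  intro h0
  have h1 : z = ((R : ℝ)⁻¹ : ℝ) := by
    have hRne : (R : ℂ) ≠ 0 := by
      simpa using (show (R:ℝ) ≠ 0 by positivity)
    have : (starRingEnd ℂ) z = (R : ℂ)⁻¹ := by
      field_simp at h0 ⊢; linear_combination h0
    calc z = (starRingEnd ℂ) ((starRingEnd ℂ) z) := by simp
    _ = (starRingEnd ℂ) ((R : ℂ)⁻¹) := by rw [this]
    _ = ((R : ℝ)⁻¹ : ℝ) := by
        simp [← Complex.ofReal_inv]
  rcases hcases hz with h | h <;> rw [h1] at h <;> simp at h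
  · have : 0 < R := by linarith
    have := inv_pos.mpr this
    linarith

lemma hRsub_mem (hz : -z ∈ Complex.slitPlane) (hR : 1 < R) :
    (R : ℂ) - z ∈ Complex.slitPlane := by
  rcases hcases hz with h | h
  · exact Complex.mem_slitPlane_iff.mpr (Or.inl (by simp; linarith))
  · exact Complex.mem_slitPlane_iff.mpr (Or.inr (by simpa using h))

lemma h1sub_mem (hz : -z ∈ Complex.slitPlane) (hR : 1 < R) :
    1 - (starRingEnd ℂ) z * (R : ℂ) ∈ Complex.slitPlane := by
  rcases hcases hz with h | h
  · refine Complex.mem_slitPlane_iff.mpr (Or.inl ?_)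
    simp [Complex.sub_re, Complex.mul_re]
    nlinarith
  · refine Complex.mem_slitPlane_iff.mpr (Or.inr ?_)
    simp [Complex.sub_im, Complex.mul_im]
    exact ⟨h, by linarith⟩

lemma hnegconj_mem (hz : -z ∈ Complex.slitPlane) : -(starRingEnd ℂ) z ∈ Complex.slitPlane := by
  rcases hcases hz with h | h
  · exact Complex.mem_slitPlane_iff.mpr (Or.inl (by simpa using h))
  · exact Complex.mem_slitPlane_iff.mpr (Or.inr (by simpa using h))

end basic


noncomputable def Qfun (R : ℝ) (z : ℂ) : ℂ :=
  z * ((R : ℂ) - z) * ((starRingEnd ℂ) z * (R : ℂ) - 1)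

lemma Qim (R : ℝ) (z : ℂ) : (Qfun R z).im
    = -z.im * (R * (1 + z.re ^ 2 + z.im ^ 2) - 2 * z.re) := by
  simp [Qfun, Complex.mul_im, Complex.mul_re, Complex.sub_re, Complex.sub_im]
  ring

lemma Qre (R : ℝ) (z : ℂ) (hy : z.im = 0) : (Qfun R z).re
    = z.re * (R - z.re) * (z.re * R - 1) := by
  simp [Qfun, Complex.mul_im, Complex.mul_re, Complex.sub_re, Complex.sub_im, hy]

lemma PQ (R : ℝ) (hR : 1 < R) (z : ℂ) (hz0 : z ≠ 0) :
    Pfun R z = ((Complex.normSq z * R ^ 2)⁻¹ : ℝ) * Qfun R z := by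
  have hR0 : (R : ℂ) ≠ 0 := by simpa using (show (R:ℝ) ≠ 0 by positivity)
  have hc : (starRingEnd ℂ) z ≠ 0 := by simpa using hz0
  have hns : z * (starRingEnd ℂ) z = ((Complex.normSq z : ℝ) : ℂ) := Complex.mul_conj z
  have hnsne : Complex.normSq z ≠ 0 := by
    simpa [Complex.normSq_eq_zero] using hz0
  have hd : ((Complex.normSq z * R ^ 2 : ℝ) : ℂ) = z * ((starRingEnd ℂ) z * (R : ℂ) ^ 2) := by
    push_cast
    rw [← hns]; ring
  rw [Pfun, Qfun, Complex.ofReal_inv, show ((Complex.normSq z * R ^ 2 : ℝ) : ℂ)⁻¹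
      = (z * ((starRingEnd ℂ) z * (R : ℂ) ^ 2))⁻¹ from by rw [hd]]
  field_simp

lemma P_mem (R : ℝ) (hR : 1 < R) (z : ℂ) (hz : -z ∈ Complex.slitPlane)
    (hc : z.re < 0 ∨ z.im ≠ 0) (hz0 : z ≠ 0) :
    Pfun R z ∈ Complex.slitPlane := by
  have hnspos : 0 < Complex.normSq z := Complex.normSq_pos.mpr hz0
  have htpos : 0 < (Complex.normSq z * R ^ 2)⁻¹ := by positivity
  rw [PQ R hR z hz0]
  rcases hc with h | h
  · -- z.im could be anything? no: if im ≠ 0 handled below; here re<0. but im could be ≠0 too; fine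
    rcases eq_or_ne z.im 0 with hy | hy
    · refine Complex.mem_slitPlane_iff.mpr (Or.inl ?_)
      rw [Complex.re_ofReal_mul, Qre R z hy]
      have h1 : 0 < -z.re := by linarith
      have h2 : 0 < R - z.re := by linarith
      have h3 : 0 < 1 - z.re * R := by nlinarith
      have h7 : 0 < z.re * (R - z.re) * (z.re * R - 1) := by
        nlinarith [mul_pos (mul_pos h1 h2) h3]
      exact mul_pos htpos h7
    · refine Complex.mem_slitPlane_iff.mpr (Or.inr ?_)
      rw [Complex.im_ofReal_mul, Qim R z]
      have h4 : 0 < R * (1 + z.re ^ 2 + z.im ^ 2) - 2 * z.re := by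
        nlinarith [sq_nonneg (z.re - 1), sq_nonneg z.im]
      intro h0
      rcases mul_eq_zero.mp h0 with h5 | h5
      · exact absurd h5 (ne_of_gt htpos)
      · rcases mul_eq_zero.mp h5 with h6 | h6
        · simp at h6; exact hy h6
        · linarith
  · refine Complex.mem_slitPlane_iff.mpr (Or.inr ?_)
    rw [Complex.im_ofReal_mul, Qim R z]
    have h4 : 0 < R * (1 + z.re ^ 2 + z.im ^ 2) - 2 * z.re := by
      nlinarith [sq_nonneg (z.re - 1), sq_nonneg z.im]
    intro h0
    rcases mul_eq_zero.mp h0 with h5 | h5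
    · exact absurd h5 (ne_of_gt htpos)
    · rcases mul_eq_zero.mp h5 with h6 | h6
      · simp at h6; exact h h6
      · linarith



lemma wd_pair (f : ℂ → ℂ) (z a b : ℂ) (L : ℂ →L[ℝ] ℂ)
    (hf : HasFDerivAt f L z) (h1 : L 1 = a + b)
    (hI : L Complex.I = a * Complex.I - b * Complex.I) :
    wdz f z = a ∧ wdzbar f z = b := by
  unfold wdz wdzbar
  rw [hf.fderiv, h1, hI]
  constructor
  · linear_combination ((b - a) / 2) * Complex.I_sq
  · linear_combination ((a - b) / 2) * Complex.I_sq

lemma hasDerivAt_logneg {z : ℂ} (hz : -z ∈ Complex.slitPlane) :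
    HasDerivAt (fun w => Complex.log (-w)) z⁻¹ z := by
  have h := (Complex.hasDerivAt_log hz).comp z (hasDerivAt_neg z)
  simpa [Function.comp_def, inv_neg] using h

lemma hasDerivAt_logRsub {R : ℝ} {z : ℂ} (h : (R : ℂ) - z ∈ Complex.slitPlane) :
    HasDerivAt (fun w => Complex.log ((R : ℂ) - w)) (-((R : ℂ) - z)⁻¹) z := by
  have h2 : HasDerivAt (fun w : ℂ => (R : ℂ) - w) (-1) z := (hasDerivAt_id z).const_sub (R : ℂ)
  have := (Complex.hasDerivAt_log h).comp z h2
  simpa [Function.comp_def] using this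

lemma hasDerivAt_log1sub {R : ℝ} {w : ℂ} (h : 1 - w * (R : ℂ) ∈ Complex.slitPlane) :
    HasDerivAt (fun w => Complex.log (1 - w * (R : ℂ))) (-(1 - w * (R : ℂ))⁻¹ * R) w := by
  have h2 : HasDerivAt (fun w : ℂ => 1 - w * (R : ℂ)) (-(R : ℂ)) w := by
    simpa using ((hasDerivAt_id w).mul_const (R : ℂ)).const_sub 1
  have := (Complex.hasDerivAt_log h).comp w h2
  exact this.congr_deriv (by ring)

lemma argif_eq {z : ℂ} (hz : -z ∈ Complex.slitPlane) :
    (((if 0 < Complex.arg z then Complex.arg z else Complex.arg z + 2 * Real.pi : ℝ)) : ℂ)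
      = -(Complex.I / 2) * Complex.log (-z) + (Complex.I / 2) * Complex.log (-(starRingEnd ℂ) z)
        + (Real.pi : ℂ) := by
  have hcases : z.re < 0 ∨ z.im ≠ 0 := by simpa [Complex.mem_slitPlane_iff] using hz
  have h1 : (if 0 < Complex.arg z then Complex.arg z else Complex.arg z + 2 * Real.pi)
      = Complex.arg (-z) + Real.pi := by
    rcases lt_trichotomy z.im 0 with h | h | h
    · rw [if_neg (by simpa using not_lt.mpr (Complex.arg_neg_iff.mpr h).le),
        Complex.arg_neg_eq_arg_add_pi_of_im_neg h]
      ring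
    · have hre : z.re < 0 := by
        rcases hcases with h' | h'
        · exact h'
        · exact absurd h h'
      have hpi : Complex.arg z = Real.pi := Complex.arg_eq_pi_iff.mpr ⟨hre, h⟩
      have h0 : Complex.arg (-z) = 0 := Complex.arg_eq_zero_iff.mpr ⟨by simp; linarith, by simp [h]⟩
      rw [if_pos (by rw [hpi]; exact Real.pi_pos), hpi, h0, zero_add]
    · have hpos : 0 < Complex.arg z := by
        have h0 : ¬ Complex.arg z < 0 := by
          rw [Complex.arg_neg_iff]; linarith
        have hne : Complex.arg z ≠ 0 := fun hc => by
          have := (Complex.arg_eq_zero_iff.mp hc).2; linarith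
        exact lt_of_le_of_ne (not_lt.mp h0) (Ne.symm hne)
      rw [if_pos hpos, Complex.arg_neg_eq_arg_sub_pi_of_im_pos h]
      ring
  rw [h1]
  have hpi : Complex.arg (-z) ≠ Real.pi := Complex.slitPlane_arg_ne_pi hz
  have hconj : Complex.log (-(starRingEnd ℂ) z) = (starRingEnd ℂ) (Complex.log (-z)) := by
    rw [← map_neg, Complex.log_conj _ hpi]
  rw [hconj, Complex.log]
  simp only [map_add, Complex.conj_ofReal, map_mul, Complex.conj_I]
  push_cast
  linear_combination ((Complex.arg (-z) : ℂ)) * Complex.I_sq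

lemma expE (R : ℝ) (hR : 1 < R) {z : ℂ} (h1 : z ≠ 0) (h2 : z ≠ (R : ℂ))
    (h3 : (starRingEnd ℂ) z * (R : ℂ) ≠ 1) :
    Complex.exp (Efun R z) = ((R : ℂ) ^ 2)⁻¹ := by
  have hR0 : (R : ℂ) ≠ 0 := by simpa using (show (R:ℝ) ≠ 0 by positivity)
  have hc : (starRingEnd ℂ) z ≠ 0 := by simpa using h1
  have hRz : (R : ℂ) - z ≠ 0 := sub_ne_zero.mpr (Ne.symm h2)
  have h1s : 1 - (starRingEnd ℂ) z * (R : ℂ) ≠ 0 := sub_ne_zero.mpr (Ne.symm h3)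
  have hnum : (starRingEnd ℂ) z * (R : ℂ) - 1 ≠ 0 := sub_ne_zero.mpr h3
  have hP : Pfun R z ≠ 0 :=
    div_ne_zero (mul_ne_zero hRz hnum) (mul_ne_zero hc (pow_ne_zero 2 hR0))
  rw [Efun, Complex.exp_add, Complex.exp_sub, Complex.exp_sub,
    Complex.exp_log hP, Complex.exp_log hRz, Complex.exp_log h1s,
    Complex.exp_log (neg_ne_zero.mpr hc)]
  rw [div_div, div_mul_eq_mul_div, div_eq_iff (mul_ne_zero hRz h1s), Pfun]
  field_simp
  ring


lemma key (R : ℝ) (hR : 1 < R) (z₀ : ℂ) (hz : -z₀ ∈ Complex.slitPlane) :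
    ∃ C : ℂ, hform R =ᶠ[nhds z₀] fun z => Afun R z + Bfun R ((starRingEnd ℂ) z) + C := by
  have hR0 : (R : ℂ) ≠ 0 := by simpa using (show (R:ℝ) ≠ 0 by positivity)
  have hz0 : z₀ ≠ 0 := hz_ne_zero hz
  have hU : ∀ᶠ z in nhds z₀, -z ∈ Complex.slitPlane := by
    have hop : IsOpen {z : ℂ | -z ∈ Complex.slitPlane} :=
      Complex.isOpen_slitPlane.preimage continuous_neg
    exact hop.eventually_mem hz
  have hEcont : ContinuousAt (Efun R) z₀ := by
    have hPmem := P_mem R hR z₀ hz (hcases hz) hz0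
    have hconjc : Continuous fun z : ℂ => (starRingEnd ℂ) z := Complex.continuous_conj
    have hPc : ContinuousAt (Pfun R) z₀ := by
      apply ContinuousAt.div
      · exact ((continuous_const.sub continuous_id).mul
          ((hconjc.mul continuous_const).sub continuous_const)).continuousAt
      · exact (hconjc.mul continuous_const).continuousAt
      · exact mul_ne_zero (by simpa using hz0) (pow_ne_zero 2 hR0)
    refine ContinuousAt.add (ContinuousAt.sub (ContinuousAt.sub ?_ ?_) ?_) ?_
    · exact hPc.clog hPmem
    · exact ((continuous_const.sub continuous_id).continuousAt).clog (hRsub_mem hz hR)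
    · exact ((continuous_const.sub (hconjc.mul continuous_const)).continuousAt).clog
        (h1sub_mem hz hR)
    · exact (hconjc.neg.continuousAt).clog (hnegconj_mem hz)
  have hsmall : ∀ᶠ z in nhds z₀, dist (Efun R z) (Efun R z₀) < 2 * Real.pi := by
    have h2 := hEcont (Metric.ball_mem_nhds (Efun R z₀) (by positivity : (0:ℝ) < 2 * Real.pi))
    filter_upwards [h2] with z hzb
    simpa [Metric.mem_ball, dist_comm] using hzb
  have hEeq : ∀ᶠ z in nhds z₀, Efun R z = Efun R z₀ := by
    filter_upwards [hU, hsmall] with z hUz hsz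
    have h1 : Complex.exp (Efun R z - Efun R z₀) = 1 := by
      rw [Complex.exp_sub, expE R hR (hz_ne_zero hUz) (hz_ne_R hUz hR) (hz_conj_ne hUz hR),
        expE R hR hz0 (hz_ne_R hz hR) (hz_conj_ne hz hR), div_self]
      exact inv_ne_zero (pow_ne_zero 2 hR0)
    obtain ⟨n, hn⟩ := Complex.exp_eq_one_iff.mp h1
    have hnorm : dist (Efun R z) (Efun R z₀) = |(n : ℝ)| * (2 * Real.pi) := by
      rw [dist_eq_norm, hn, norm_mul]
      simp [Complex.norm_I, _root_.abs_of_nonneg Real.pi_pos.le]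
    have hn0 : n = 0 := by
      by_contra hne
      have : (1 : ℝ) ≤ |(n : ℝ)| := by
        rw [← Int.cast_abs]
        exact_mod_cast Int.one_le_abs (by omega)
      have h3 : 2 * Real.pi ≤ |(n : ℝ)| * (2 * Real.pi) := by
        nlinarith [Real.pi_pos]
      rw [hnorm] at hsz
      linarith
    rw [hn0] at hn
    simpa [sub_eq_zero] using hn
  refine ⟨-2 * Real.pi * Complex.I / R - cR R * Efun R z₀, ?_⟩
  filter_upwards [hU, hEeq] with z hUz hEz
  have hlogP : Complex.log (Pfun R z) = Efun R z₀ + Complex.log ((R : ℂ) - z)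
      + Complex.log (1 - (starRingEnd ℂ) z * (R : ℂ)) - Complex.log (-(starRingEnd ℂ) z) := by
    rw [← hEz, Efun]; ring
  show hform R z = _
  rw [hform, argif_eq hUz,
    show (((R : ℂ) - z) * ((starRingEnd ℂ) z * (R : ℂ) - 1)
        / ((starRingEnd ℂ) z * (R : ℂ) ^ 2)) = Pfun R z from rfl,
    hlogP, Afun, Bfun, cR]
  field_simp
  linear_combination ((Complex.log (-z)
    - Complex.log (-(starRingEnd ℂ) z))) * Complex.I_sq


noncomputable def aval (R : ℝ) (z : ℂ) : ℂ :=
  -(1 / (R : ℂ)) * z⁻¹ + cR R * ((R : ℂ) - z)⁻¹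

noncomputable def bval (R : ℝ) (w : ℂ) : ℂ :=
  (R : ℂ) * w⁻¹ + cR R * (1 - w * (R : ℂ))⁻¹ * (R : ℂ)

lemma hasDerivAt_Afun (R : ℝ) (hR : 1 < R) {z : ℂ} (hz : -z ∈ Complex.slitPlane) :
    HasDerivAt (Afun R) (aval R z) z := by
  have h := ((hasDerivAt_logneg hz).const_mul (-(1 / (R : ℂ)))).sub
    ((hasDerivAt_logRsub (hRsub_mem hz hR)).const_mul (cR R))
  exact h.congr_deriv (by rw [aval]; ring)

lemma hasDerivAt_Bfun (R : ℝ) (hR : 1 < R) {z : ℂ} (hz : -z ∈ Complex.slitPlane) :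
    HasDerivAt (Bfun R) (bval R ((starRingEnd ℂ) z)) ((starRingEnd ℂ) z) := by
  have hm1 : -((starRingEnd ℂ) z) ∈ Complex.slitPlane := hnegconj_mem hz
  have h := ((hasDerivAt_logneg hm1).const_mul ((R : ℂ))).sub
    ((hasDerivAt_log1sub (h1sub_mem hz hR)).const_mul (cR R))
  exact h.congr_deriv (by rw [bval]; ring)

lemma wd_vals (R : ℝ) (hR : 1 < R) {z₀ : ℂ} (hz : -z₀ ∈ Complex.slitPlane) :
    wdz (hform R) z₀ = aval R z₀ ∧ wdzbar (hform R) z₀ = bval R ((starRingEnd ℂ) z₀) := by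
  obtain ⟨C, hEv⟩ := key R hR z₀ hz
  have hA := (hasDerivAt_Afun R hR hz).hasFDerivAt.restrictScalars ℝ
  have hB := (hasDerivAt_Bfun R hR hz).hasFDerivAt.restrictScalars ℝ
  have hconj : HasFDerivAt (fun z : ℂ => (starRingEnd ℂ) z)
      (Complex.conjCLE.toContinuousLinearMap) z₀ :=
    Complex.conjCLE.toContinuousLinearMap.hasFDerivAt
  have hcomp := hB.comp z₀ hconj
  have hsum := (hA.add hcomp).add_const C
  have hfd := hsum.congr_of_eventuallyEq hEv
  refine wd_pair _ _ _ _ _ hfd ?_ ?_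
  · simp [ContinuousLinearMap.smulRight_apply, Complex.conjCLE_apply, smul_eq_mul]
    try ring
  · simp [ContinuousLinearMap.smulRight_apply, Complex.conjCLE_apply, Complex.conj_I,
      smul_eq_mul]
    try ring

lemma harmonic_part (R : ℝ) (hR : 1 < R) {z₀ : ℂ} (hz : -z₀ ∈ Complex.slitPlane) :
    wdzbar (wdz (hform R)) z₀ = 0 := by
  have hop : IsOpen {z : ℂ | -z ∈ Complex.slitPlane} :=
    Complex.isOpen_slitPlane.preimage continuous_neg
  have hEv : wdz (hform R) =ᶠ[nhds z₀] aval R := by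
    filter_upwards [hop.eventually_mem hz] with z hzU
    exact (wd_vals R hR hzU).1
  have hz0 : z₀ ≠ 0 := hz_ne_zero hz
  have hRz : (R : ℂ) - z₀ ≠ 0 := sub_ne_zero.mpr (Ne.symm (hz_ne_R hz hR))
  have h1 : HasDerivAt (aval R)
      (-(1 / (R : ℂ)) * (-(z₀ ^ 2)⁻¹) + cR R * (-(((R : ℂ) - z₀) ^ 2)⁻¹ * (-1))) z₀ := by
    have ha := (hasDerivAt_inv hz0).const_mul (-(1 / (R : ℂ)))
    have hinner : HasDerivAt (fun y : ℂ => (R : ℂ) - y) (-1) z₀ :=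
      (hasDerivAt_id z₀).const_sub (R : ℂ)
    have hb := ((hasDerivAt_inv hRz).comp z₀ hinner).const_mul (cR R)
    exact ha.add hb
  have hfd := (h1.hasFDerivAt.restrictScalars ℝ).congr_of_eventuallyEq hEv
  exact (wd_pair (wdz (hform R)) z₀
    (-(1 / (R : ℂ)) * (-(z₀ ^ 2)⁻¹) + cR R * (-(((R : ℂ) - z₀) ^ 2)⁻¹ * (-1))) 0 _ hfd
    (by simp [ContinuousLinearMap.smulRight_apply, smul_eq_mul])
    (by simp [ContinuousLinearMap.smulRight_apply, smul_eq_mul]; try ring)).2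

end Stmt16Aux

/-- The dual example on the slit annulus: 𝔥(z) = −(2i/R)Arg z − ((R²−1)/R) log((R−z)(z̄R−1)/(z̄R²))
with Arg ∈ (0,2π); harmonicity, derivative formulas and Hopf product −1/z². -/
theorem stmt16 (R : ℝ) (hR : 1 < R)
    (arg2π : ℂ → ℝ)
    (harg : ∀ z : ℂ, arg2π z
      = if 0 < Complex.arg z then Complex.arg z else Complex.arg z + 2 * π)
    (𝔥 : ℂ → ℂ)
    (hdef : ∀ z : ℂ, 𝔥 z
      = -(2 * Complex.I / (R : ℂ)) * ((arg2π z : ℝ) : ℂ)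
        - (((R : ℂ) ^ 2 - 1) / (R : ℂ))
          * Complex.log (((R : ℂ) - z) * ((starRingEnd ℂ z) * (R : ℂ) - 1)
              / ((starRingEnd ℂ z) * (R : ℂ) ^ 2)))
    (S : Set ℂ)
    (hS : S = {z : ℂ | 1 ≤ ‖z‖ ∧ ‖z‖ ≤ R
        ∧ ¬(z.im = 0 ∧ 0 ≤ z.re)}) :
    (∀ z ∈ S, wdzbar (fun w => wdz 𝔥 w) z = 0) ∧
    (∀ z ∈ S,
      wdz 𝔥 z = (z * (R : ℂ) - 1) / (z * ((R : ℂ) - z)) ∧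
      (starRingEnd ℂ) (wdzbar 𝔥 z) = (z - (R : ℂ)) / (z * (z * (R : ℂ) - 1)) ∧
      wdz 𝔥 z * (starRingEnd ℂ) (wdzbar 𝔥 z) = -1 / z ^ 2) := by
  have h𝔥 : 𝔥 = Stmt16Aux.hform R := by
    funext z
    rw [hdef z, harg z]
    rfl
  have hR0 : (R : ℂ) ≠ 0 := by simpa using (show (R : ℝ) ≠ 0 by positivity)
  have hmem : ∀ z ∈ S, -z ∈ Complex.slitPlane := by
    intro z hzS
    rw [hS] at hzS
    obtain ⟨h1, h2, h3⟩ := hzS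
    rw [Complex.mem_slitPlane_iff]
    simp only [Complex.neg_re, Complex.neg_im]
    push_neg at h3
    by_cases him : z.im = 0
    · left; have := h3 him; linarith
    · right; simpa using him
  constructor
  · intro z hzS
    rw [h𝔥]
    exact Stmt16Aux.harmonic_part R hR (hmem z hzS)
  · intro z hzS
    have hzslit := hmem z hzS
    have hz0 : z ≠ 0 := Stmt16Aux.hz_ne_zero hzslit
    have hzR : z ≠ (R : ℂ) := Stmt16Aux.hz_ne_R hzslit hR
    have hRz : (R : ℂ) - z ≠ 0 := sub_ne_zero.mpr (Ne.symm hzR)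
    have hzR1 : z * (R : ℂ) - 1 ≠ 0 := by
      intro h0
      have hcst : (starRingEnd ℂ) z * (R : ℂ) = 1 := by
        have : (starRingEnd ℂ) (z * (R : ℂ) - 1) = (starRingEnd ℂ) (0 : ℂ) := by rw [h0]
        simpa [sub_eq_zero, Complex.conj_ofReal] using this
      exact Stmt16Aux.hz_conj_ne hzslit hR hcst
    have h1z : (1 : ℂ) - z * (R : ℂ) ≠ 0 := by
      intro h0
      apply hzR1
      linear_combination -h0
    have hwd := Stmt16Aux.wd_vals R hR hzslit
    rw [h𝔥]
    have hconjb : (starRingEnd ℂ) (Stmt16Aux.bval R ((starRingEnd ℂ) z))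
        = (R : ℂ) * z⁻¹ + (((R : ℂ) ^ 2 - 1) / (R : ℂ)) * (1 - z * (R : ℂ))⁻¹ * (R : ℂ) := by
      rw [Stmt16Aux.bval, Stmt16Aux.cR]
      simp only [map_add, map_mul, map_inv₀, map_sub, map_one, map_pow, map_div₀,
        Complex.conj_conj, Complex.conj_ofReal]
    refine ⟨?_, ?_, ?_⟩
    · rw [hwd.1, Stmt16Aux.aval, Stmt16Aux.cR]
      field_simp
      ring
    · rw [hwd.2, hconjb]
      have h1z' : (1 : ℂ) - (R : ℂ) * z ≠ 0 := by rwa [mul_comm] at h1z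
      have hzR1' : -1 + (R : ℂ) * z ≠ 0 := by
        intro h0; apply h1z'; linear_combination -h0
      field_simp
      have hX : (-1 + (R : ℂ) * z) * (-1 + (R : ℂ) * z)⁻¹ = 1 := mul_inv_cancel₀ hzR1'
      linear_combination (z - (R : ℂ)) * hX
    · rw [hwd.1, hwd.2, hconjb, Stmt16Aux.aval, Stmt16Aux.cR]
      have h1z' : (1 : ℂ) - (R : ℂ) * z ≠ 0 := by rwa [mul_comm] at h1z
      field_simp
      ring
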